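/- arXiv:2004.02076 — 4 statements merged into one kernel-verified Lean document; each statement's English description precedes it below -/
import Mathlib

section
/- For any two distinct l1, l2 ∈ [k] with l1 < l2, the intersection I_{l1} ∩ I_{l2} is the singleton {(l1-1)·k + (l2 - l1·(l1+1)/2)}. -/
open Finset

/-- `p¹_l(a) = (l-1)k + (a - l(l-1)/2)` -/
def pOne (k l a : ℕ) : ℕ := (l - 1) * k + a - l * (l - 1) / 2

/-- `p²_l(a) = (a-1)k + (l - a(a+1)/2)` -/
def pTwo (k l a : ℕ) : ℕ := (a - 1) * k + l - a * (a + 1) / 2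

/-- `I¹_l` : first-type packet indices of group `l` -/
def I1 (k l : ℕ) : Finset ℕ := (Finset.Icc 1 (k - l)).image (pOne k l)

/-- `I²_l` : second-type packet indices of group `l` -/
def I2 (k l : ℕ) : Finset ℕ := (Finset.Icc 1 (l - 1)).image (pTwo k l)

/-- `I_l = I¹_l ∪ I²_l` -/
def Igrp (k l : ℕ) : Finset ℕ := I1 k l ∪ I2 k l

/-- start of the `m`-th band -/
def Tband (k m : ℕ) : ℕ := m * k - m * (m + 1) / 2

lemma tri_le (k m : ℕ) (h : m ≤ k) : m * (m + 1) ≤ 2 * (m * k) := by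
  rcases Nat.eq_zero_or_pos k with hk | hk
  · subst hk; interval_cases m; simp
  · have h1 : m * m ≤ m * k := Nat.mul_le_mul_left m h
    have h2 : m ≤ m * k := Nat.le_mul_of_pos_right m hk
    nlinarith

lemma pOne_eq (k m a : ℕ) (h : m < k) :
    pOne k (m + 1) a = Tband k m + a := by
  have h3 := tri_le k m h.le
  unfold pOne Tband
  simp only [Nat.add_sub_cancel]
  have h1 : (m + 1) * m = m * (m + 1) := Nat.mul_comm _ _
  omega

lemma pTwo_eq (k l m a : ℕ) (h : m < k) (hl : l = m + a + 1) :
    pTwo k l (m + 1) = Tband k m + a := by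
  have h3 := tri_le k m h.le
  have h1 : (m + 1) * ((m + 1) + 1) = m * (m + 1) + 2 * (m + 1) := by ring
  unfold pTwo Tband
  simp only [Nat.add_sub_cancel]
  omega

lemma T_succ (k m : ℕ) (h : m < k) : Tband k (m + 1) = Tband k m + (k - (m + 1)) := by
  have h3 := tri_le k m h.le
  have h1 : (m + 1) * ((m + 1) + 1) = m * (m + 1) + 2 * (m + 1) := by ring
  have h2 : (m + 1) * k = m * k + k := by ring
  unfold Tband
  omega

lemma T_mono (k m : ℕ) : ∀ m', m ≤ m' → m' ≤ k → Tband k m ≤ Tband k m' := by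
  intro m'
  induction m' with
  | zero =>
    intro h _
    obtain rfl : m = 0 := Nat.le_zero.mp h
    exact le_rfl
  | succ n ih =>
    intro h h'
    rcases Nat.eq_or_lt_of_le h with h0 | h0
    · exact h0 ▸ le_rfl
    · have := ih (by omega) (by omega)
      rw [T_succ k n (by omega)]
      omega

lemma band_lt (k m₁ a₁ m₂ a₂ : ℕ) (ha₁ : 1 ≤ a₁) (h₁ : m₁ + a₁ < k)
    (ha₂ : 1 ≤ a₂) (hm : m₁ < m₂) (hm₂ : m₂ ≤ k) :
    Tband k m₁ + a₁ < Tband k m₂ + a₂ := by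
  have hs := T_succ k m₁ (by omega)
  have hmono := T_mono k (m₁ + 1) m₂ (by omega) hm₂
  omega

lemma band_inj (k m₁ a₁ m₂ a₂ : ℕ) (ha₁ : 1 ≤ a₁) (h₁ : m₁ + a₁ < k)
    (ha₂ : 1 ≤ a₂) (h₂ : m₂ + a₂ < k)
    (heq : Tband k m₁ + a₁ = Tband k m₂ + a₂) : m₁ = m₂ ∧ a₁ = a₂ := by
  rcases lt_trichotomy m₁ m₂ with h | h | h
  · have := band_lt k m₁ a₁ m₂ a₂ ha₁ h₁ ha₂ h (by omega)
    omega
  · subst h; omega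
  · have := band_lt k m₂ a₂ m₁ a₁ ha₂ h₂ ha₁ h (by omega)
    omega

lemma mem_Igrp (k l x : ℕ) (hl : 1 ≤ l) (hlk : l ≤ k) :
    x ∈ Igrp k l ↔ ∃ m a, x = Tband k m + a ∧ 1 ≤ a ∧ m + a < k ∧
      (m + 1 = l ∨ m + a + 1 = l) := by
  simp only [Igrp, mem_union, I1, I2, mem_image, mem_Icc]
  constructor
  · rintro (⟨a, ⟨ha1, ha2⟩, rfl⟩ | ⟨b, ⟨hb1, hb2⟩, rfl⟩)
    · obtain ⟨m, rfl⟩ : ∃ m, l = m + 1 := ⟨l - 1, by omega⟩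
      exact ⟨m, a, pOne_eq k m a (by omega), ha1, by omega, Or.inl rfl⟩
    · obtain ⟨m, rfl⟩ : ∃ m, b = m + 1 := ⟨b - 1, by omega⟩
      refine ⟨m, l - (m + 1), ?_, by omega, by omega, Or.inr (by omega)⟩
      exact pTwo_eq k l m (l - (m + 1)) (by omega) (by omega)
  · rintro ⟨m, a, rfl, ha, hma, h | h⟩
    · subst h
      exact Or.inl ⟨a, ⟨ha, by omega⟩, pOne_eq k m a (by omega)⟩
    · subst h
      exact Or.inr ⟨m + 1, ⟨by omega, by omega⟩,
        pTwo_eq k (m + a + 1) m a (by omega) rfl⟩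

lemma target_eq (k l₁ l₂ : ℕ) (h1 : 1 ≤ l₁) (h2 : l₁ < l₂) (h3 : l₂ ≤ k) :
    (l₁ - 1) * k + l₂ - l₁ * (l₁ + 1) / 2 = Tband k (l₁ - 1) + (l₂ - l₁) := by
  obtain ⟨m, rfl⟩ : ∃ m, l₁ = m + 1 := ⟨l₁ - 1, by omega⟩
  have h3' := tri_le k m (by omega)
  have hr : (m + 1) * ((m + 1) + 1) = m * (m + 1) + 2 * (m + 1) := by ring
  unfold Tband
  simp only [Nat.add_sub_cancel]
  omega

/-- For `l₁ < l₂` in `[k]`, `I_{l₁} ∩ I_{l₂} = {(l₁-1)k + (l₂ - l₁(l₁+1)/2)}`. -/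
theorem Igrp_inter_singleton (k l₁ l₂ : ℕ) (hk : 2 ≤ k)
    (h1 : 1 ≤ l₁) (h2 : l₁ < l₂) (h3 : l₂ ≤ k) :
    Igrp k l₁ ∩ Igrp k l₂ = {(l₁ - 1) * k + l₂ - l₁ * (l₁ + 1) / 2} := by
  have ht := target_eq k l₁ l₂ h1 h2 h3
  ext x
  rw [mem_inter, mem_Igrp k l₁ x h1 (by omega), mem_Igrp k l₂ x (by omega) h3,
    mem_singleton]
  constructor
  · rintro ⟨⟨m, a, rfl, ha, hma, hc1⟩, ⟨m', a', he, ha', hma', hc2⟩⟩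
    obtain ⟨rfl, rfl⟩ := band_inj k m a m' a' ha hma ha' hma' he
    have hm1 : m + 1 = l₁ := by omega
    have hm2 : m + a + 1 = l₂ := by omega
    have e1 : l₁ - 1 = m := by omega
    have e2 : l₂ - l₁ = a := by omega
    rw [ht, e1, e2]
  · rintro rfl
    rw [ht]
    exact ⟨⟨l₁ - 1, l₂ - l₁, rfl, by omega, by omega, Or.inl (by omega)⟩,
      ⟨l₁ - 1, l₂ - l₁, rfl, by omega, by omega, Or.inr (by omega)⟩⟩
end

section
/- The symmetric difference of the sets I_1, I_2, ..., I_{k-1} equals I_k; equivalently, over GF(2), the sum of the indicator vectors (in GF(2)^{k(k-1)/2}) of I_1 through I_{k-1} equals the indicator vector of I_k. -/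
open Finset

/-- `P k a b` : packet index of the pair `(a,b)` with `a < b`. -/
def P (k a b : ℕ) : ℕ := (a - 1) * k + (b - a) - a * (a - 1) / 2

lemma pOne_eq_P (k l a' : ℕ) : pOne k l a' = P k l (l + a') := by
  simp [pOne, P, Nat.add_sub_cancel_left]

lemma pTwo_eq_P (k l a : ℕ) (ha : 1 ≤ a) (hal : a ≤ l) : pTwo k l a = P k a l := by
  obtain ⟨c, rfl⟩ : ∃ c, a = c + 1 := ⟨a - 1, by omega⟩
  obtain ⟨t, ht⟩ := Nat.even_mul_succ_self c
  have e1 : (c + 1) * ((c + 1) + 1) = 2 * t + 2 * (c + 1) := by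
    rw [show (c + 1) * ((c + 1) + 1) = c * (c + 1) + 2 * (c + 1) from by ring, ht]; ring
  have e2 : (c + 1) * ((c + 1) - 1) = 2 * t := by
    rw [Nat.succ_sub_one, mul_comm, ht]; ring
  simp only [pTwo, P, e1, e2]
  generalize ((c + 1) - 1) * k = A
  omega

lemma P_eq (k a b : ℕ) (ha : 1 ≤ a) (hak : a ≤ k) :
    2 * P k a b + a * (a - 1) = 2 * ((a - 1) * k + (b - a)) := by
  obtain ⟨c, rfl⟩ : ∃ c, a = c + 1 := ⟨a - 1, by omega⟩
  obtain ⟨t, ht⟩ := Nat.even_mul_succ_self c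
  have e2 : (c + 1) * c = 2 * t := by
    rw [mul_comm, ht]; ring
  have hb : c * (c + 1) ≤ c * (2 * k) := Nat.mul_le_mul_left c (by omega)
  have hb2 : c * (2 * k) = 2 * (c * k) := by ring
  simp only [P, Nat.add_sub_cancel, e2]
  have ht' : t ≤ c * k := by omega
  generalize hA : c * k = A at *
  omega

lemma P_inj {k a b a' b' : ℕ} (ha : 1 ≤ a) (hab : a < b) (hbk : b ≤ k)
    (ha' : 1 ≤ a') (hab' : a' < b') (hbk' : b' ≤ k)
    (h : P k a b = P k a' b') : a = a' ∧ b = b' := by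
  have e1 := P_eq k a b ha (by omega)
  have e2 := P_eq k a' b' ha' (by omega)
  rw [h] at e1
  zify [show 1 ≤ a from ha, show a ≤ b from hab.le, show 1 ≤ a' from ha',
    show a' ≤ b' from hab'.le] at e1 e2
  have key : a = a' := by
    rcases lt_trichotomy a a' with hlt | heq | hgt
    · exfalso
      have h1 : (0:ℤ) ≤ ((a':ℤ) - a - 1) * ((k:ℤ) - a' - 1) :=
        mul_nonneg (by omega) (by omega)
      nlinarith [sq_nonneg ((a':ℤ) - a), e1, e2, h1,
        show ((b:ℤ)) ≤ k from by exact_mod_cast hbk,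
        show ((a':ℤ)) + 1 ≤ b' from by omega]
    · exact heq
    · exfalso
      have h1 : (0:ℤ) ≤ ((a:ℤ) - a' - 1) * ((k:ℤ) - a - 1) :=
        mul_nonneg (by omega) (by omega)
      nlinarith [sq_nonneg ((a:ℤ) - a'), e1, e2, h1,
        show ((b':ℤ)) ≤ k from by exact_mod_cast hbk',
        show ((a:ℤ)) + 1 ≤ b from by omega]
  subst key
  refine ⟨rfl, ?_⟩
  have : (b:ℤ) = b' := by linarith [e1, e2]
  exact_mod_cast this

lemma mem_Igrp_iff {k l i : ℕ} (hl1 : 1 ≤ l) (hl2 : l ≤ k) :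
    i ∈ Igrp k l ↔ ∃ a b, 1 ≤ a ∧ a < b ∧ b ≤ k ∧ (a = l ∨ b = l) ∧ i = P k a b := by
  simp only [Igrp, mem_union, I1, I2, mem_image, mem_Icc]
  constructor
  · rintro (⟨a', ⟨h1, h2⟩, heq⟩ | ⟨a, ⟨h1, h2⟩, heq⟩)
    · exact ⟨l, l + a', by omega, by omega, by omega, Or.inl rfl,
        by rw [← heq, pOne_eq_P]⟩
    · exact ⟨a, l, h1, by omega, by omega, Or.inr rfl,
        by rw [← heq, pTwo_eq_P k l a h1 (by omega)]⟩
  · rintro ⟨a, b, ha, hab, hbk, (rfl | rfl), rfl⟩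
    · left
      exact ⟨b - a, ⟨by omega, by omega⟩, by rw [pOne_eq_P]; congr 1; omega⟩
    · right
      exact ⟨a, ⟨ha, by omega⟩, by rw [pTwo_eq_P k b a ha (by omega)]⟩

/-- Over GF(2), the sum of the indicator vectors of `I_1,…,I_{k-1}` equals the
indicator vector of `I_k` (the symmetric difference of `I_1,…,I_{k-1}` is `I_k`). -/
theorem Igrp_indicator_sum (k : ℕ) (hk : 2 ≤ k) :
    ∀ i : ℕ,
      (∑ l ∈ Finset.Icc 1 (k - 1), if i ∈ Igrp k l then (1 : ZMod 2) else 0) =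
        if i ∈ Igrp k k then (1 : ZMod 2) else 0 := by
  intro i
  by_cases hex : ∃ a b, 1 ≤ a ∧ a < b ∧ b ≤ k ∧ i = P k a b
  · obtain ⟨a, b, ha, hab, hbk, rfl⟩ := hex
    have hmem : ∀ l, 1 ≤ l → l ≤ k → (P k a b ∈ Igrp k l ↔ (l = a ∨ l = b)) := by
      intro l hl1 hl2
      rw [mem_Igrp_iff hl1 hl2]
      constructor
      · rintro ⟨a', b', ha', hab', hbk', hor, heq⟩
        obtain ⟨rfl, rfl⟩ := P_inj ha hab hbk ha' hab' hbk' heq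
        omega
      · rintro (h | h)
        · exact ⟨a, b, ha, hab, hbk, Or.inl h.symm, rfl⟩
        · exact ⟨a, b, ha, hab, hbk, Or.inr h.symm, rfl⟩
    have h1 : ∀ l ∈ Finset.Icc 1 (k - 1),
        (if P k a b ∈ Igrp k l then (1 : ZMod 2) else 0) =
          (if l = a then (1 : ZMod 2) else 0) + (if l = b then (1 : ZMod 2) else 0) := by
      intro l hl
      simp only [mem_Icc] at hl
      simp only [hmem l hl.1 (by omega)]
      have hne : a ≠ b := hab.ne
      by_cases h1 : l = a <;> by_cases h2 : l = b <;> simp_all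
    rw [Finset.sum_congr rfl h1, Finset.sum_add_distrib,
      Finset.sum_ite_eq' (Finset.Icc 1 (k-1)) a (fun _ => (1 : ZMod 2)),
      Finset.sum_ite_eq' (Finset.Icc 1 (k-1)) b (fun _ => (1 : ZMod 2))]
    simp only [hmem k (by omega) le_rfl]
    have hamem : a ∈ Finset.Icc 1 (k-1) := by simp only [mem_Icc]; omega
    rw [if_pos hamem]
    by_cases hb : b = k
    · have : b ∉ Finset.Icc 1 (k-1) := by simp only [mem_Icc]; omega
      rw [if_neg this, if_pos (Or.inr hb.symm)]
      ring
    · have : b ∈ Finset.Icc 1 (k-1) := by simp only [mem_Icc]; omega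
      rw [if_pos this, if_neg (by omega)]
      decide
  · push_neg at hex
    have hnot : ∀ l, 1 ≤ l → l ≤ k → i ∉ Igrp k l := by
      intro l hl1 hl2 hmem
      rw [mem_Igrp_iff hl1 hl2] at hmem
      obtain ⟨a, b, ha, hab, hbk, _, heq⟩ := hmem
      exact hex a b ha hab hbk heq
    rw [Finset.sum_eq_zero, if_neg (hnot k (by omega) le_rfl)]
    intro l hl
    simp only [mem_Icc] at hl
    rw [if_neg (hnot l hl.1 (by omega))]
end

section
/- In the (k,2)-GIC problem, the user partition into groups G_1, ..., G_k is feasible for the UPM scheme and achieves broadcast rate ∑_{e=1}^k (|Y_e| - c_e) = k, where Y_e = I_e (so |Y_e| = k-1) and c_e = min over users in G_e of |A_i^j ∩ Y_e| = k - 2. -/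
open Finset

lemma pOne_eq_s12 (k l a : ℕ) (hl : 1 ≤ l) (hlk : l ≤ k) :
    2 * pOne k l a = 2 * ((l-1)*k) + 2*a - l*(l-1) ∧ l*(l-1) ≤ 2 * ((l-1)*k) := by
  unfold pOne
  have hl1 : l - 1 + 1 = l := by omega
  have h2d : 2 * (l*(l-1)/2) = l*(l-1) := by
    refine Nat.mul_div_cancel' (even_iff_two_dvd.mp ?_)
    have := Nat.even_mul_succ_self (l-1)
    rw [hl1, mul_comm] at this; exact this
  have hle : l*(l-1) ≤ 2 * ((l-1)*k) := by
    have h1 : l*(l-1) ≤ 2*k*(l-1) := Nat.mul_le_mul_right _ (by omega)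
    have h2 : 2*k*(l-1) = 2*((l-1)*k) := by ring
    omega
  set d := l*(l-1)/2
  set X := (l-1)*k
  set P := l*(l-1)
  omega

lemma pTwo_eq_s12 (k l b : ℕ) (hb : 1 ≤ b) (hbl : b + 1 ≤ l) (hlk : l ≤ k) :
    2 * pTwo k l b = 2 * ((b-1)*k) + 2*l - b*(b+1) ∧ b*(b+1) ≤ 2 * ((b-1)*k) + 2*l := by
  obtain ⟨b', rfl⟩ : ∃ b', b = b'+1 := ⟨b-1, by omega⟩
  unfold pTwo
  simp only [Nat.add_sub_cancel]
  have h2d : 2 * ((b'+1)*(b'+1+1)/2) = (b'+1)*(b'+1+1) :=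
    Nat.mul_div_cancel' (even_iff_two_dvd.mp (Nat.even_mul_succ_self (b'+1)))
  have hle : (b'+1)*(b'+1+1) ≤ b'*k + l := by
    have h1 : (b'+1)*(b'+1+1) ≤ (b'+1)*l := Nat.mul_le_mul_left _ (by omega)
    have h2 : (b'+1)*l = b'*l + l := by ring
    have h3 : b'*l ≤ b'*k := Nat.mul_le_mul_left _ hlk
    omega
  set d := (b'+1)*(b'+1+1)/2
  set X := b'*k
  set P := (b'+1)*(b'+1+1)
  omega

lemma pTwo_strictMono (k l a b : ℕ) (ha : 1 ≤ a) (hab : a < b) (hbl : b + 1 ≤ l)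
    (hlk : l ≤ k) : 2 * pTwo k l a < 2 * pTwo k l b := by
  obtain ⟨E1, B1⟩ := pTwo_eq_s12 k l a ha (by omega) hlk
  obtain ⟨E2, B2⟩ := pTwo_eq_s12 k l b (by omega) hbl hlk
  obtain ⟨a', rfl⟩ : ∃ a', a = a'+1 := ⟨a-1, by omega⟩
  obtain ⟨c, rfl⟩ : ∃ c, b = a'+1+c+1 := ⟨b-a'-2, by omega⟩
  obtain ⟨t, rfl⟩ : ∃ t, k = (a'+1+c+1)+1+t := ⟨k-a'-c-3, by omega⟩
  simp only [Nat.add_sub_cancel] at E1 E2 B1 B2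
  have key : 2*(a'*((a'+1+c+1)+1+t)) + (a'+1+c+1)*(a'+1+c+1+1)
      < 2*((a'+1+c)*((a'+1+c+1)+1+t)) + (a'+1)*(a'+1+1) := by
    nlinarith [sq_nonneg c]
  omega

lemma pTwo_lt_pOne (k l a b : ℕ) (hb : 1 ≤ b) (hbl : b + 1 ≤ l)
    (ha : 1 ≤ a) (hak : a ≤ k - l) (hlk : l ≤ k) : 2 * pTwo k l b < 2 * pOne k l a := by
  obtain ⟨E1, B1⟩ := pTwo_eq_s12 k l b hb hbl hlk
  obtain ⟨E2, B2⟩ := pOne_eq_s12 k l a (by omega) hlk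
  obtain ⟨b', rfl⟩ : ∃ b', b = b'+1 := ⟨b-1, by omega⟩
  obtain ⟨c, rfl⟩ : ∃ c, l = b'+1+c+1 := ⟨l-b'-2, by omega⟩
  obtain ⟨t, rfl⟩ : ∃ t, k = (b'+1+c+1)+t := ⟨k-(b'+1+c+1), by omega⟩
  simp only [Nat.add_sub_cancel] at E1 E2 B1 B2 hak
  have key : 2*(b'*((b'+1+c+1)+t)) + 2*(b'+1+c+1) + (b'+1+c+1)*(b'+1+c)
      < 2*((b'+1+c)*((b'+1+c+1)+t)) + 2*a + (b'+1)*(b'+1+1) := by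
    nlinarith [sq_nonneg c, ha]
  omega

lemma Igrp_card (k e : ℕ) (he1 : 1 ≤ e) (he2 : e ≤ k) : (Igrp k e).card = k - 1 := by
  have h1 : (I1 k e).card = k - e := by
    rw [I1, Finset.card_image_of_injOn, Nat.card_Icc]
    · omega
    · intro a _ b _ h
      have E1 := (pOne_eq_s12 k e a he1 he2).1
      have E2 := (pOne_eq_s12 k e b he1 he2).1
      have B := (pOne_eq_s12 k e a he1 he2).2
      have : 2 * pOne k e a = 2 * pOne k e b := by rw [h]
      omega
  have h2 : (I2 k e).card = e - 1 := by
    rw [I2, Finset.card_image_of_injOn, Nat.card_Icc]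
    · omega
    · intro a ha b hb h
      simp only [Finset.mem_coe, Finset.mem_Icc] at ha hb
      rcases lt_trichotomy a b with hlt | heq | hgt
      · exact absurd (by rw [h]) (pTwo_strictMono k e a b ha.1 hlt (by omega) he2).ne
      · exact heq
      · exact absurd (by rw [h]) (pTwo_strictMono k e b a hb.1 hgt (by omega) he2).ne'
  have hdisj : Disjoint (I1 k e) (I2 k e) := by
    rw [Finset.disjoint_left]
    rintro x hx1 hx2
    simp only [I1, I2, Finset.mem_image, Finset.mem_Icc] at hx1 hx2
    obtain ⟨a, ⟨ha1, ha2⟩, rfl⟩ := hx1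
    obtain ⟨b, ⟨hb1, hb2⟩, hbx⟩ := hx2
    have := pTwo_lt_pOne k e a b hb1 (by omega) ha1 ha2 he2
    omega
  rw [Igrp, Finset.card_union_of_disjoint hdisj, h1, h2]
  omega

/-- In the `(k,2)`-GIC problem the group partition `G_1,…,G_k` is feasible for
the UPM scheme with `Y_e = I_e` of size `k-1`, local side information
`c_e = min_{i} |(I_e \ {i}) ∩ Y_e| = k - 2`, and total broadcast rate
`∑_{e=1}^k (|Y_e| - c_e) = k`. -/
theorem UPM_rate_k (k : ℕ) (hk : 2 ≤ k) :
    (∀ e ∈ Finset.Icc 1 k, (Igrp k e).card = k - 1 ∧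
      ∀ i ∈ Igrp k e, ((Igrp k e).erase i ∩ Igrp k e).card = k - 2) ∧
    ∑ e ∈ Finset.Icc 1 k, ((Igrp k e).card - (k - 2)) = k := by
  have hcard : ∀ e ∈ Finset.Icc 1 k, (Igrp k e).card = k - 1 := by
    intro e he
    rw [Finset.mem_Icc] at he
    exact Igrp_card k e he.1 he.2
  constructor
  · intro e he
    refine ⟨hcard e he, fun i hi => ?_⟩
    rw [Finset.inter_eq_left.mpr (Finset.erase_subset _ _),
      Finset.card_erase_of_mem hi, hcard e he]
    omega
  · rw [Finset.sum_congr rfl (fun e he => by rw [hcard e he])]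
    have h1 : k - 1 - (k - 2) = 1 := by omega
    rw [h1, Finset.sum_const, Nat.card_Icc, smul_eq_mul, mul_one]
    omega
end

section
/- The optimal broadcast rate of the UPM scheme is at most that of the PPM scheme: for any GIC problem, min over valid user partitions of the UPM objective ∑_e (|Y_e| - c_e) is at most min over valid packet partitions of the PPM objective ∑_e (|T_e| - d_e). -/
open Finset

/-- The finite set of users of a GIC problem with `m` packets, where packet `i`
is demanded by `U i` users: user `u_i^j` is the pair `(i, j)`. -/
def userSet (m : ℕ) (U : ℕ → ℕ) : Finset (ℕ × ℕ) :=
  (Finset.Icc 1 m).biUnion (fun i => (Finset.Icc 1 (U i)).image (fun j => (i, j)))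

/-- The set of broadcast rates achievable by the PPM scheme: partition the packet
set `[m]` into parts `T_e` and send `|T_e| - d_e` coded packets per part, where
`d_e = min_{i ∈ T_e, j ∈ [U i]} |A_i^j ∩ T_e|`. -/
def PPMrates (m : ℕ) (U : ℕ → ℕ) (A : ℕ → ℕ → Finset ℕ) : Set ℕ :=
  {r : ℕ | ∃ (h : ℕ) (T : Fin h → Finset ℕ),
    (∀ e f, e ≠ f → Disjoint (T e) (T f)) ∧
    (Finset.univ.biUnion T = Finset.Icc 1 m) ∧
    (∀ e, (T e).Nonempty) ∧
    r = ∑ e, ((T e).card -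
      sInf {n : ℕ | ∃ i ∈ T e, ∃ j ∈ Finset.Icc 1 (U i), n = (A i j ∩ T e).card})}

/-- The set of broadcast rates achievable by the UPM scheme: partition the user
set into parts `W_e` and send `|Y_e| - c_e` coded packets per part, where `Y_e`
is the set of packets demanded in `W_e` and
`c_e = min_{u_i^j ∈ W_e} |A_i^j ∩ Y_e|`. -/
def UPMrates (m : ℕ) (U : ℕ → ℕ) (A : ℕ → ℕ → Finset ℕ) : Set ℕ :=
  {r : ℕ | ∃ (h : ℕ) (W : Fin h → Finset (ℕ × ℕ)),
    (∀ e f, e ≠ f → Disjoint (W e) (W f)) ∧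
    (Finset.univ.biUnion W = userSet m U) ∧
    (∀ e, (W e).Nonempty) ∧
    r = ∑ e, (((W e).image Prod.fst).card -
      sInf {n : ℕ | ∃ u ∈ W e, n = (A u.1 u.2 ∩ (W e).image Prod.fst).card})}

/-- The optimal broadcast rate of the UPM scheme is at most that of the PPM
scheme. -/
theorem UPM_le_PPM (m : ℕ) (hm : 1 ≤ m) (U : ℕ → ℕ) (hU : ∀ i, 1 ≤ U i)
    (A : ℕ → ℕ → Finset ℕ)
    (hA : ∀ i ∈ Finset.Icc 1 m, ∀ j ∈ Finset.Icc 1 (U i),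
      A i j ⊆ (Finset.Icc 1 m).erase i) :
    sInf (UPMrates m U A) ≤ sInf (PPMrates m U A) := by

  have hmemUser : ∀ u : ℕ × ℕ, u ∈ userSet m U ↔ u.1 ∈ Finset.Icc 1 m ∧ u.2 ∈ Finset.Icc 1 (U u.1) := by
    intro u
    simp only [userSet, Finset.mem_biUnion, Finset.mem_image]
    constructor
    · rintro ⟨i, hi, j, hj, rfl⟩; exact ⟨hi, hj⟩
    · rintro ⟨h1, h2⟩; exact ⟨u.1, h1, u.2, h2, rfl⟩
  have hP : sInf (PPMrates m U A) ∈ PPMrates m U A := by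
    apply Nat.sInf_mem
    refine ⟨_, 1, fun _ => Finset.Icc 1 m, ?_, ?_, ?_, rfl⟩
    · intro e f hef; exact absurd (Subsingleton.elim e f) hef
    · simp
    · intro _; exact ⟨1, by simp [hm]⟩
  obtain ⟨h, T, hdisj, hunion, hne, hr⟩ := hP
  have hTsub : ∀ e, T e ⊆ Finset.Icc 1 m := fun e i hi =>
    hunion ▸ Finset.mem_biUnion.mpr ⟨e, Finset.mem_univ e, hi⟩
  set W : Fin h → Finset (ℕ × ℕ) := fun e => (userSet m U).filter (fun u => u.1 ∈ T e) with hW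
  have hmemW : ∀ e (u : ℕ × ℕ), u ∈ W e ↔ u.1 ∈ T e ∧ u.2 ∈ Finset.Icc 1 (U u.1) := by
    intro e u
    simp only [hW, Finset.mem_filter, hmemUser]
    constructor
    · rintro ⟨⟨_, h2⟩, h3⟩; exact ⟨h3, h2⟩
    · rintro ⟨h1, h2⟩; exact ⟨⟨hTsub e h1, h2⟩, h1⟩
  have himg : ∀ e, (W e).image Prod.fst = T e := by
    intro e
    apply Finset.Subset.antisymm
    · intro i hi
      obtain ⟨u, hu, rfl⟩ := Finset.mem_image.mp hi
      exact ((hmemW e u).mp hu).1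
    · intro i hi
      refine Finset.mem_image.mpr ⟨(i, 1), ?_, rfl⟩
      exact (hmemW e (i, 1)).mpr ⟨hi, by simp [hU i]⟩
  apply Nat.sInf_le
  refine ⟨h, W, ?_, ?_, ?_, ?_⟩
  · intro e f hef
    refine Finset.disjoint_left.mpr ?_
    intro u hu1 hu2
    exact Finset.disjoint_left.mp (hdisj e f hef) ((hmemW e u).mp hu1).1 ((hmemW f u).mp hu2).1
  · apply Finset.Subset.antisymm
    · intro u hu
      obtain ⟨e, _, hue⟩ := Finset.mem_biUnion.mp hu
      exact Finset.mem_filter.mp hue |>.1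
    · intro u hu
      have h1 := (hmemUser u).mp hu
      have : u.1 ∈ Finset.univ.biUnion T := hunion ▸ h1.1
      obtain ⟨e, _, he⟩ := Finset.mem_biUnion.mp this
      exact Finset.mem_biUnion.mpr ⟨e, Finset.mem_univ e, (hmemW e u).mpr ⟨he, h1.2⟩⟩
  · intro e
    obtain ⟨i, hi⟩ := hne e
    exact ⟨(i, 1), (hmemW e (i, 1)).mpr ⟨hi, by simp [hU i]⟩⟩
  · rw [hr]
    apply Finset.sum_congr rfl
    intro e _
    rw [himg e]
    congr 1
    congr 1
    ext n
    simp only [Set.mem_setOf_eq]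
    constructor
    · rintro ⟨i, hi, j, hj, rfl⟩
      exact ⟨(i, j), (hmemW e (i, j)).mpr ⟨hi, hj⟩, rfl⟩
    · rintro ⟨u, hu, rfl⟩
      have h1 := (hmemW e u).mp hu
      exact ⟨u.1, h1.1, u.2, h1.2, rfl⟩
end
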